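/- Let p be a prime with p ≡ 2 (mod 3), and work in the quaternion algebra B = ℍ[ℚ, −3, −p] with basis 1, i, j, k (i² = −3, j² = −p, k = ij). Let O be the ℤ-span of {1, (1+i)/2, (j−k)/2, (i−k)/3} in B, and let O^T = {2x − trd(x) : x ∈ O} be its Gross lattice. Set β₁ = i, β₂ = (i + 3j − k)/3, β₃ = (i + 2k)/3. Then: (a) O^T equals the ℤ-span of {β₁, β₂, β₃}; (b) with pairing (x, y) = (1/2)·trd(x·ȳ), the Gram matrix of (β₁, β₂, β₃) is [[3, 1, 1], [1, (4p+1)/3, −(2p−1)/3], [1, −(2p−1)/3, (4p+1)/3]]; and (c) this basis attains the successive minima of O^T, which are D₁ = 3 and D₂ = D₃ = (4p+1)/3; in particular every nonzero element of O^T has nrd ≥ 3, and every element of O^T not lying in the ℝ-span of β₁ has nrd ≥ (4p+1)/3. -/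

import Mathlib

open scoped Quaternion

set_option maxHeartbeats 1000000

open scoped Quaternion

private lemma sq_one_le {b : ℤ} (hb : b ≠ 0) : 1 ≤ b ^ 2 := by
  rcases lt_or_gt_of_ne hb with h | h <;> nlinarith

private lemma key_aux (p a b c : ℤ) (hp : 2 ≤ p) (h : ¬(b = 0 ∧ c = 0)) :
    12 * p + 3 ≤ 3 * (3 * a + b + c) ^ 2 + 12 * p * (b ^ 2 - b * c + c ^ 2) := by
  have hbc : b ≠ 0 ∨ c ≠ 0 := by tauto
  have hm : 1 ≤ b ^ 2 - b * c + c ^ 2 := by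
    rcases hbc with hb | hc
    · nlinarith [sq_nonneg (2 * c - b), sq_one_le hb]
    · nlinarith [sq_nonneg (2 * b - c), sq_one_le hc]
  by_cases h3 : (3 : ℤ) ∣ (b + c)
  · have h3m : (3 : ℤ) ∣ (b ^ 2 - b * c + c ^ 2) := by
      obtain ⟨t, ht⟩ := h3
      have : b ^ 2 - b * c + c ^ 2 = (b + c) ^ 2 - 3 * (b * c) := by ring
      rw [this, ht]
      exact dvd_sub ⟨3 * t ^ 2, by ring⟩ ⟨b * c, rfl⟩
    have hm3 : 3 ≤ b ^ 2 - b * c + c ^ 2 := by omega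
    nlinarith [sq_nonneg (3 * a + b + c)]
  · have hs : (3 * a + b + c) ≠ 0 := by
      intro h0
      exact h3 ⟨-a, by linarith⟩
    have := sq_one_le hs
    nlinarith

/-- Normalized successive minimal basis of the Gross lattice of the supersingular elliptic
curve with `j`-invariant `0` (for `p ≡ 2 mod 3`): in `B = ℍ[ℚ, -3, -p]`, with
`O = ⟨1, (1+i)/2, (j-k)/2, (i-k)/3⟩`, the Gross lattice `{2x - trd x : x ∈ O}` is spanned by
`β₁ = i`, `β₂ = (i+3j-k)/3`, `β₃ = (i+2k)/3`, whose Gram matrix (for the pairing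
`(x,y) = (1/2)·trd(x·ȳ)`) is `[[3, 1, 1], [1, (4p+1)/3, -(2p-1)/3], [1, -(2p-1)/3, (4p+1)/3]]`,
and this basis attains the successive minima `D₁ = 3`, `D₂ = D₃ = (4p+1)/3`. -/
theorem stmt_12 (p : ℕ) (hp : p.Prime) (hmod : p % 3 = 2)
    (i j k : ℍ[ℚ, -3, -(p : ℚ)])
    (hi : i = ⟨0, 1, 0, 0⟩) (hj : j = ⟨0, 0, 1, 0⟩) (hk : k = i * j)
    (O : Submodule ℤ ℍ[ℚ, -3, -(p : ℚ)])
    (hO : O = Submodule.span ℤ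
      ({1, ((1 : ℚ)/2) • (1 + i), ((1 : ℚ)/2) • (j - k), ((1 : ℚ)/3) • (i - k)} :
        Set ℍ[ℚ, -3, -(p : ℚ)]))
    (β₁ β₂ β₃ : ℍ[ℚ, -3, -(p : ℚ)])
    (hβ₁ : β₁ = i) (hβ₂ : β₂ = ((1 : ℚ)/3) • (i + 3 * j - k))
    (hβ₃ : β₃ = ((1 : ℚ)/3) • (i + 2 * k)) :
    -- (a) the Gross lattice of `O` is spanned by `β₁, β₂, β₃`
    {y | ∃ x ∈ O, y = 2 * x - (x + star x)} =
      (Submodule.span ℤ ({β₁, β₂, β₃} : Set ℍ[ℚ, -3, -(p : ℚ)]) : Set ℍ[ℚ, -3, -(p : ℚ)]) ∧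
    -- (b) the Gram matrix of `(β₁, β₂, β₃)`
    (β₁ * star β₁).re = 3 ∧ (β₁ * star β₂).re = 1 ∧ (β₁ * star β₃).re = 1 ∧
    (β₂ * star β₂).re = (4 * (p : ℚ) + 1) / 3 ∧
    (β₂ * star β₃).re = -((2 * (p : ℚ) - 1) / 3) ∧
    (β₃ * star β₃).re = (4 * (p : ℚ) + 1) / 3 ∧
    -- (c) the basis attains the successive minima `D₁ = 3`, `D₂ = D₃ = (4p+1)/3`
    LinearIndependent ℚ ![β₁, β₂, β₃] ∧
    (∀ w ∈ Submodule.span ℤ ({β₁, β₂, β₃} : Set ℍ[ℚ, -3, -(p : ℚ)]), w ≠ 0 →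
      3 ≤ (w * star w).re) ∧
    (∀ w ∈ Submodule.span ℤ ({β₁, β₂, β₃} : Set ℍ[ℚ, -3, -(p : ℚ)]),
      w ∉ Submodule.span ℚ ({β₁} : Set ℍ[ℚ, -3, -(p : ℚ)]) →
      (4 * (p : ℚ) + 1) / 3 ≤ (w * star w).re) := by
  have hp2 : (2 : ℤ) ≤ (p : ℤ) := by exact_mod_cast hp.two_le
  -- explicit coordinates for β's
  have hb1 : β₁ = (⟨0, 1, 0, 0⟩ : ℍ[ℚ, -3, -(p : ℚ)]) := by rw [hβ₁, hi]
  have c3 : (3 : ℍ[ℚ, -3, -(p : ℚ)]) = (⟨3, 0, 0, 0⟩ : ℍ[ℚ, -3, -(p : ℚ)]) := rfl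
  have c2 : (2 : ℍ[ℚ, -3, -(p : ℚ)]) = (⟨2, 0, 0, 0⟩ : ℍ[ℚ, -3, -(p : ℚ)]) := rfl
  have hb2 : β₂ = (⟨0, 1/3, 1, -(1/3)⟩ : ℍ[ℚ, -3, -(p : ℚ)]) := by
    rw [hβ₂, hk, hi, hj, c3]; ext <;> simp <;> norm_num
  have hb3 : β₃ = (⟨0, 1/3, 0, 2/3⟩ : ℍ[ℚ, -3, -(p : ℚ)]) := by
    rw [hβ₃, hk, hi, hj, c2]; ext <;> simp <;> norm_num
  -- generators of O
  set e₁ : ℍ[ℚ, -3, -(p : ℚ)] := ((1 : ℚ)/2) • (1 + i) with he₁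
  set e₂ : ℍ[ℚ, -3, -(p : ℚ)] := ((1 : ℚ)/2) • (j - k) with he₂
  set e₃ : ℍ[ℚ, -3, -(p : ℚ)] := ((1 : ℚ)/3) • (i - k) with he₃
  have he₁' : e₁ = (⟨1/2, 1/2, 0, 0⟩ : ℍ[ℚ, -3, -(p : ℚ)]) := by
    rw [he₁, hi]; ext <;> simp <;> norm_num
  have he₂' : e₂ = (⟨0, 0, 1/2, -(1/2)⟩ : ℍ[ℚ, -3, -(p : ℚ)]) := by
    rw [he₂, hk, hi, hj]; ext <;> simp <;> norm_num
  have he₃' : e₃ = (⟨0, 1/3, 0, -(1/3)⟩ : ℍ[ℚ, -3, -(p : ℚ)]) := by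
    rw [he₃, hk, hi, hj]; ext <;> simp <;> norm_num
  have hOspan : O = Submodule.span ℤ ({1, e₁, e₂, e₃} : Set ℍ[ℚ, -3, -(p : ℚ)]) := hO
  -- the Gross map identity
  have hg : ∀ x : ℍ[ℚ, -3, -(p : ℚ)], 2 * x - (x + star x) = x - star x := by
    intro x; rw [two_mul]; abel
  have hpQ : (2 : ℚ) ≤ (p : ℚ) := by exact_mod_cast hp.two_le
  have hrep : ∀ w ∈ Submodule.span ℤ ({β₁, β₂, β₃} : Set ℍ[ℚ, -3, -(p : ℚ)]),
      ∃ a b c : ℤ, w = a • β₁ + b • β₂ + c • β₃ := by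
    intro w hw
    rw [Submodule.mem_span_insert] at hw
    obtain ⟨a, z, hz, rfl⟩ := hw
    rw [Submodule.mem_span_insert] at hz
    obtain ⟨b, z', hz', rfl⟩ := hz
    rw [Submodule.mem_span_singleton] at hz'
    obtain ⟨c, rfl⟩ := hz'
    exact ⟨a, b, c, by abel⟩
  have hwcomp : ∀ a b c : ℤ, ((a : ℤ) • β₁ + b • β₂ + c • β₃) =
      (⟨0, (a : ℚ) + b/3 + c/3, b, -(b : ℚ)/3 + 2*c/3⟩ : ℍ[ℚ, -3, -(p : ℚ)]) := by
    intro a b c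
    rw [hb1, hb2, hb3]
    ext <;> simp <;> push_cast <;> ring
  have hnorm : ∀ x : ℍ[ℚ, -3, -(p : ℚ)], (x * star x).re =
      x.re^2 + 3*x.imI^2 + (p : ℚ)*x.imJ^2 + 3*(p : ℚ)*x.imK^2 := by
    intro x
    simp [QuaternionAlgebra.re_mul]
    ring
  have hQ9 : ∀ a b c : ℤ,
      9 * (((a • β₁ + b • β₂ + c • β₃) * star (a • β₁ + b • β₂ + c • β₃)).re)
      = 3 * (3*(a : ℚ) + b + c)^2 + 12*(p : ℚ)*((b : ℚ)^2 - b*c + c^2) := by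
    intro a b c
    rw [hwcomp a b c, hnorm]
    simp only
    push_cast
    ring
  -- part (a)
  refine ⟨?_, ?_, ?_, ?_, ?_, ?_, ?_, ?_, ?_, ?_⟩
  · ext y
    simp only [Set.mem_setOf_eq, SetLike.mem_coe]
    constructor
    · rintro ⟨x, hx, rfl⟩
      rw [hg]
      rw [hOspan] at hx
      induction hx using Submodule.span_induction with
      | mem z hz =>
        rcases hz with rfl | rfl | rfl | rfl
        · simp
        · have : e₁ - star e₁ = β₁ := by rw [he₁', hb1]; ext <;> simp <;> norm_num
          rw [this]; exact Submodule.subset_span (by simp)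
        · have : e₂ - star e₂ = β₂ - β₃ := by rw [he₂', hb2, hb3]; ext <;> simp <;> norm_num
          rw [this]
          exact sub_mem (Submodule.subset_span (by simp)) (Submodule.subset_span (by simp))
        · have : e₃ - star e₃ = β₁ - β₃ := by rw [he₃', hb1, hb3]; ext <;> simp <;> norm_num
          rw [this]
          exact sub_mem (Submodule.subset_span (by simp)) (Submodule.subset_span (by simp))
      | zero => simp
      | add x y hx hy ihx ihy =>
        have : (x + y) - star (x + y) = (x - star x) + (y - star y) := by
          rw [star_add]; abel
        rw [this]; exact add_mem ihx ihy
      | smul n x hx ih =>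
        have : (n • x) - star (n • x) = n • (x - star x) := by
          have hs : star (n • x) = n • star x := by ext <;> simp [mul_comm]
          rw [hs, smul_sub]
        rw [this]; exact Submodule.smul_mem _ _ ih
    · intro hy
      induction hy using Submodule.span_induction with
      | mem z hz =>
        have h1 : e₁ ∈ O := by
          rw [hOspan]
          exact Submodule.subset_span (by simp)
        have h2 : e₂ ∈ O := by
          rw [hOspan]
          exact Submodule.subset_span (by simp)
        have h3 : e₃ ∈ O := by
          rw [hOspan]
          exact Submodule.subset_span (by simp)
        rcases hz with rfl | rfl | rfl
        · exact ⟨e₁, h1, by rw [hg, he₁', hb1]; ext <;> simp <;> norm_num⟩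
        · refine ⟨e₁ + e₂ - e₃, sub_mem (add_mem h1 h2) h3, ?_⟩
          rw [hg, he₁', he₂', he₃', hb2]
          ext <;> simp <;> norm_num
        · refine ⟨e₁ - e₃, sub_mem h1 h3, ?_⟩
          rw [hg, he₁', he₃', hb3]
          ext <;> simp <;> norm_num
      | zero => exact ⟨0, zero_mem _, by simp⟩
      | add x y hx hy ihx ihy =>
        obtain ⟨x₁, hx₁, rfl⟩ := ihx
        obtain ⟨x₂, hx₂, rfl⟩ := ihy
        refine ⟨x₁ + x₂, add_mem hx₁ hx₂, ?_⟩
        rw [hg, hg, hg, star_add]; abel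
      | smul n x hx ih =>
        obtain ⟨x₀, hx₀, rfl⟩ := ih
        refine ⟨n • x₀, Submodule.smul_mem _ _ hx₀, ?_⟩
        rw [hg, hg]
        have hs : star (n • x₀) = n • star x₀ := by ext <;> simp [mul_comm]
        rw [hs, smul_sub]
  · rw [hb1]; simp [QuaternionAlgebra.re_mul]
  · rw [hb1, hb2]; simp [QuaternionAlgebra.re_mul]
  · rw [hb1, hb3]; simp [QuaternionAlgebra.re_mul]
  · rw [hb2]; simp [QuaternionAlgebra.re_mul]; ring
  · rw [hb2, hb3]; simp [QuaternionAlgebra.re_mul]; ring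
  · rw [hb3]; simp [QuaternionAlgebra.re_mul]; ring
  · rw [Fintype.linearIndependent_iff]
    intro g hgsum
    rw [Fin.sum_univ_three] at hgsum
    simp only [Matrix.cons_val_zero, Matrix.cons_val_one, Matrix.head_cons,
      Matrix.cons_val_two, Matrix.tail_cons] at hgsum
    rw [hb1, hb2, hb3] at hgsum
    rw [QuaternionAlgebra.ext_iff] at hgsum
    simp only [QuaternionAlgebra.re_add, QuaternionAlgebra.imI_add, QuaternionAlgebra.imJ_add,
      QuaternionAlgebra.imK_add, QuaternionAlgebra.re_smul, QuaternionAlgebra.imI_smul,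
      QuaternionAlgebra.imJ_smul, QuaternionAlgebra.imK_smul, QuaternionAlgebra.re_zero,
      QuaternionAlgebra.imI_zero, QuaternionAlgebra.imJ_zero, QuaternionAlgebra.imK_zero,
      smul_eq_mul] at hgsum
    obtain ⟨h0, h1, h2, h3⟩ := hgsum
    have hg1 : g 1 = 0 := by linarith
    have hg2 : g 2 = 0 := by linarith
    have hg0 : g 0 = 0 := by linarith
    intro idx
    fin_cases idx <;> assumption
  · intro w hw hwne
    obtain ⟨a, b, c, rfl⟩ := hrep w hw
    by_cases hbc : b = 0 ∧ c = 0
    · obtain ⟨rfl, rfl⟩ := hbc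
      have ha : a ≠ 0 := by
        rintro rfl
        exact hwne (by simp)
      have haq : (1 : ℚ) ≤ (a : ℚ)^2 := by exact_mod_cast sq_one_le ha
      have h9 := hQ9 a 0 0
      push_cast at h9
      nlinarith [h9, haq]
    · have hkQ : (12*(p : ℚ) + 3) ≤ 3 * (3*(a : ℚ) + b + c)^2 + 12*(p : ℚ)*((b : ℚ)^2 - b*c + c^2) := by
        exact_mod_cast key_aux (p : ℤ) a b c hp2 hbc
      have h9 := hQ9 a b c
      linarith
  · intro w hw hwnot
    obtain ⟨a, b, c, rfl⟩ := hrep w hw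
    have hbc : ¬(b = 0 ∧ c = 0) := by
      rintro ⟨rfl, rfl⟩
      apply hwnot
      refine Submodule.mem_span_singleton.2 ⟨(a : ℚ), ?_⟩
      rw [Int.cast_smul_eq_zsmul]
      simp
    have hkQ : (12*(p : ℚ) + 3) ≤ 3 * (3*(a : ℚ) + b + c)^2 + 12*(p : ℚ)*((b : ℚ)^2 - b*c + c^2) := by
      exact_mod_cast key_aux (p : ℤ) a b c hp2 hbc
    have h9 := hQ9 a b c
    linarith
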